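/- Let f : ℝ^d → ℝ be Lipschitz and let f_δ be differentiable with ∇f_δ(x) ∈ ∂_δ f(x) for all x. Then for any γ ≥ 0, the Goldstein γ-subdifferential of f_δ is contained in the Goldstein (δ+γ)-subdifferential of f: ∂_γ f_δ(x) ⊆ ∂_{δ+γ} f(x). In particular, any (γ, ε)-Goldstein stationary point of f_δ is a (δ+γ, ε)-Goldstein stationary point of f. -/

import Mathlib

open Filter

/-- Clarke's generalized directional derivative of f at x in direction v. -/
noncomputable def clarkeDirDeriv {d : ℕ} (f : EuclideanSpace ℝ (Fin d) → ℝ)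
    (x v : EuclideanSpace ℝ (Fin d)) : ℝ :=
  Filter.limsup (fun q : EuclideanSpace ℝ (Fin d) × ℝ => (f (q.1 + q.2 • v) - f q.1) / q.2)
    ((nhds x) ×ˢ (nhdsWithin 0 (Set.Ioi (0:ℝ))))

/-- The Clarke subdifferential of f at x. -/
def clarkeSubdiff {d : ℕ} (f : EuclideanSpace ℝ (Fin d) → ℝ)
    (x : EuclideanSpace ℝ (Fin d)) : Set (EuclideanSpace ℝ (Fin d)) :=
  {g | ∀ v, (inner ℝ g v : ℝ) ≤ clarkeDirDeriv f x v}

/-- The Goldstein δ-subdifferential of f at x. -/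
def goldsteinSubdiff {d : ℕ} (f : EuclideanSpace ℝ (Fin d) → ℝ) (δ : ℝ)
    (x : EuclideanSpace ℝ (Fin d)) : Set (EuclideanSpace ℝ (Fin d)) :=
  convexHull ℝ (⋃ y ∈ Metric.closedBall x δ, clarkeSubdiff f y)

/-- Let f be L-Lipschitz and fδ be differentiable with ∇fδ(x) ∈ ∂_δ f(x) for all x.
Then for any γ ≥ 0, conv{∇fδ(y) : ‖y - x‖ ≤ γ} ⊆ ∂_{δ+γ} f(x); in particular, any
(γ, ε)-Goldstein stationary point of fδ is a (δ+γ, ε)-Goldstein stationary point of f. -/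
theorem stmt8 {d : ℕ} (f fδ : EuclideanSpace ℝ (Fin d) → ℝ) (L δ : ℝ)
    (hL : 0 ≤ L) (hδ : 0 ≤ δ)
    (hlipf : ∀ x y, |f x - f y| ≤ L * ‖x - y‖)
    (hlipfδ : ∀ x y, |fδ x - fδ y| ≤ L * ‖x - y‖)
    (hdiff : ∀ x, DifferentiableAt ℝ fδ x)
    (hgrad : ∀ x, gradient fδ x ∈ goldsteinSubdiff f δ x)
    (γ : ℝ) (hγ : 0 ≤ γ) (x : EuclideanSpace ℝ (Fin d)) :
    (convexHull ℝ {v | ∃ y ∈ Metric.closedBall x γ, v = gradient fδ y}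
        ⊆ goldsteinSubdiff f (δ + γ) x) ∧
    (∀ ε : ℝ,
      (∃ g ∈ convexHull ℝ {v | ∃ y ∈ Metric.closedBall x γ, v = gradient fδ y}, ‖g‖ ≤ ε) →
      ∃ g ∈ goldsteinSubdiff f (δ + γ) x, ‖g‖ ≤ ε) := by
  have hsub : convexHull ℝ {v | ∃ y ∈ Metric.closedBall x γ, v = gradient fδ y}
      ⊆ goldsteinSubdiff f (δ + γ) x := by
    apply convexHull_min _ (convex_convexHull ℝ _)
    rintro v ⟨y, hy, rfl⟩
    have h1 := hgrad y
    have h2 : goldsteinSubdiff f δ y ⊆ goldsteinSubdiff f (δ + γ) x := by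
      apply convexHull_mono
      apply Set.biUnion_subset_biUnion_left
      intro z hz
      simp only [Metric.mem_closedBall] at *
      calc dist z x ≤ dist z y + dist y x := dist_triangle z y x
        _ ≤ δ + γ := add_le_add hz hy
    exact h2 h1
  refine ⟨hsub, fun ε ⟨g, hg, hgε⟩ => ⟨g, hsub hg, hgε⟩⟩
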